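/- Let f : Z → Y be C¹ near z̄ with f(z̄) ∈ Ω, Ω closed convex, and suppose metric subregularity of z ↦ f(z) − Ω at (z̄, 0) with modulus κ. Then every regular normal z* ∈ N̂_{f⁻¹(Ω)}(z̄) can be represented as z* = ∇f(z̄)* y* with y* ∈ N_Ω(f(z̄)) and ‖y*‖ ≤ κ‖z*‖. -/

import Mathlib

open Set Filter Topology Metric
open scoped Pointwise
open scoped RealInnerProductSpace

variable {Z : Type*} [NormedAddCommGroup Z] [InnerProductSpace ℝ Z]

/-- The normal cone of convex analysis to `Ω` at `y`. -/
def normalCone (Ω : Set Z) (y : Z) : Set Z :=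
  {w | ∀ y' ∈ Ω, @inner ℝ _ _ w (y' - y) ≤ 0}

/-- The regular (Fréchet) normal cone. -/
def regNormalCone (C : Set Z) (z0 : Z) : Set Z :=
  {v | ∀ ε > (0 : ℝ), ∀ᶠ z in 𝓝[C] z0, @inner ℝ _ _ v (z - z0) ≤ ε * ‖z - z0‖}

section RNRAux

open scoped RealInnerProductSpace

private lemma rnr_le_of_forall_pos {a b : ℝ} (h : ∀ ε > (0:ℝ), a ≤ b + ε) : a ≤ b := by
  by_contra hc
  push_neg at hc
  have := h ((a - b) / 2) (by linarith)
  linarith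

variable {E : Type*} [NormedAddCommGroup E] [NormedSpace ℝ E]

private lemma rnr_le_infDist {x : E} {s : Set E} (hs : s.Nonempty) {r : ℝ}
    (h : ∀ y ∈ s, r ≤ dist x y) : r ≤ Metric.infDist x s := by
  by_contra hc
  push_neg at hc
  obtain ⟨y, hy, hlt⟩ := (Metric.infDist_lt_iff hs).1 hc
  exact absurd (h y hy) (not_le.2 hlt)

/-- The (scaled) distance to the tangent cone of `Ω` at `yb`, as an infimum. -/
noncomputable def rnrSigma (Ω : Set E) (yb : E) (y : E) : ℝ :=
  ⨅ t : Set.Ioi (0:ℝ), Metric.infDist (yb + (t:ℝ) • y) Ω / (t:ℝ)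

private lemma rnrSigma_bddBelow (Ω : Set E) (yb y : E) :
    BddBelow (Set.range fun t : Set.Ioi (0:ℝ) => Metric.infDist (yb + (t:ℝ) • y) Ω / (t:ℝ)) := by
  refine ⟨0, ?_⟩
  rintro x ⟨t, rfl⟩
  exact div_nonneg Metric.infDist_nonneg (le_of_lt t.2)

private lemma rnrSigma_nonneg (Ω : Set E) (yb y : E) : 0 ≤ rnrSigma Ω yb y :=
  le_ciInf fun t => div_nonneg Metric.infDist_nonneg (le_of_lt t.2)

private lemma rnrSigma_le (Ω : Set E) (yb y : E) {t : ℝ} (ht : 0 < t) :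
    rnrSigma Ω yb y ≤ Metric.infDist (yb + t • y) Ω / t :=
  ciInf_le (rnrSigma_bddBelow Ω yb y) ⟨t, ht⟩

private lemma rnr_infDist_scale {Ω : Set E} (hconv : Convex ℝ Ω) {yb : E} (hyb : yb ∈ Ω)
    (y : E) {s t : ℝ} (hs : 0 < s) (hst : s ≤ t) :
    Metric.infDist (yb + s • y) Ω ≤ (s / t) * Metric.infDist (yb + t • y) Ω := by
  have ht : 0 < t := hs.trans_le hst
  have ha : 0 < s / t := div_pos hs ht
  rw [← div_le_iff₀' ha]
  refine rnr_le_infDist ⟨yb, hyb⟩ fun u hu => ?_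
  rw [div_le_iff₀ ha]
  have hmem : (1 - s / t) • yb + (s / t) • u ∈ Ω :=
    hconv hyb hu (by rw [sub_nonneg]; exact (div_le_one ht).2 hst) ha.le (by ring)
  calc Metric.infDist (yb + s • y) Ω
      ≤ dist (yb + s • y) ((1 - s / t) • yb + (s / t) • u) :=
        Metric.infDist_le_dist_of_mem hmem
    _ = ‖(s / t) • (yb + t • y - u)‖ := by
        rw [dist_eq_norm]
        congr 1
        have hsy : s • y = (s / t) • t • y := by
          rw [smul_smul, div_mul_cancel₀ _ ht.ne']
        rw [hsy]
        module
    _ = (s / t) * ‖yb + t • y - u‖ := by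
        rw [norm_smul, Real.norm_eq_abs, abs_of_pos ha]
    _ = dist (yb + t • y) u * (s / t) := by rw [dist_eq_norm]; ring

private lemma rnr_infDist_scale_div {Ω : Set E} (hconv : Convex ℝ Ω) {yb : E} (hyb : yb ∈ Ω)
    (y : E) {s t : ℝ} (hs : 0 < s) (hst : s ≤ t) :
    Metric.infDist (yb + s • y) Ω / s ≤ Metric.infDist (yb + t • y) Ω / t := by
  have ht : 0 < t := hs.trans_le hst
  rw [div_le_div_iff₀ hs ht]
  calc Metric.infDist (yb + s • y) Ω * t
      ≤ ((s / t) * Metric.infDist (yb + t • y) Ω) * t :=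
        mul_le_mul_of_nonneg_right (rnr_infDist_scale hconv hyb y hs hst) ht.le
    _ = Metric.infDist (yb + t • y) Ω * s := by
        field_simp

private lemma rnr_infDist_half {Ω : Set E} (hconv : Convex ℝ Ω) (hne : Ω.Nonempty) (a b : E) :
    Metric.infDist ((1/2 : ℝ) • a + (1/2 : ℝ) • b) Ω ≤
      Metric.infDist a Ω / 2 + Metric.infDist b Ω / 2 := by
  refine rnr_le_of_forall_pos fun ε hε => ?_
  obtain ⟨u, hu, hud⟩ := (Metric.infDist_lt_iff hne).1
    (lt_add_of_pos_right (Metric.infDist a Ω) hε)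
  obtain ⟨v, hv, hvd⟩ := (Metric.infDist_lt_iff hne).1
    (lt_add_of_pos_right (Metric.infDist b Ω) hε)
  have hmem : (1/2 : ℝ) • u + (1/2 : ℝ) • v ∈ Ω :=
    hconv hu hv (by norm_num) (by norm_num) (by norm_num)
  have hd : dist ((1/2:ℝ) • a + (1/2:ℝ) • b) ((1/2:ℝ) • u + (1/2:ℝ) • v)
      ≤ dist a u / 2 + dist b v / 2 := by
    rw [dist_eq_norm, dist_eq_norm, dist_eq_norm]
    have heq : (1/2:ℝ) • a + (1/2:ℝ) • b - ((1/2:ℝ) • u + (1/2:ℝ) • v)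
        = (1/2:ℝ) • (a - u) + (1/2:ℝ) • (b - v) := by module
    rw [heq]
    calc ‖(1/2:ℝ) • (a - u) + (1/2:ℝ) • (b - v)‖
        ≤ ‖(1/2:ℝ) • (a - u)‖ + ‖(1/2:ℝ) • (b - v)‖ := norm_add_le _ _
      _ = ‖a - u‖ / 2 + ‖b - v‖ / 2 := by
          rw [norm_smul, norm_smul, Real.norm_eq_abs,
            abs_of_nonneg (by norm_num : (0:ℝ) ≤ 1/2)]
          ring
  calc Metric.infDist ((1/2:ℝ) • a + (1/2:ℝ) • b) Ω
      ≤ dist ((1/2:ℝ) • a + (1/2:ℝ) • b) ((1/2:ℝ) • u + (1/2:ℝ) • v) :=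
        Metric.infDist_le_dist_of_mem hmem
    _ ≤ dist a u / 2 + dist b v / 2 := hd
    _ ≤ (Metric.infDist a Ω + ε) / 2 + (Metric.infDist b Ω + ε) / 2 := by
        gcongr <;> linarith
    _ = Metric.infDist a Ω / 2 + Metric.infDist b Ω / 2 + ε := by ring

private lemma rnrSigma_add {Ω : Set E} (hconv : Convex ℝ Ω) {yb : E} (hyb : yb ∈ Ω) (y1 y2 : E) :
    rnrSigma Ω yb (y1 + y2) ≤ rnrSigma Ω yb y1 + rnrSigma Ω yb y2 := by
  refine rnr_le_of_forall_pos fun ε hε => ?_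
  obtain ⟨⟨t1, ht1⟩, h1'⟩ := exists_lt_of_ciInf_lt
    (show rnrSigma Ω yb y1 < rnrSigma Ω yb y1 + ε/2 by linarith)
  obtain ⟨⟨t2, ht2⟩, h2'⟩ := exists_lt_of_ciInf_lt
    (show rnrSigma Ω yb y2 < rnrSigma Ω yb y2 + ε/2 by linarith)
  have ht1' : (0:ℝ) < t1 := ht1
  have ht2' : (0:ℝ) < t2 := ht2
  set t : ℝ := min t1 t2 / 2 with htdef
  have ht : 0 < t := by positivity
  have h2t1 : 2 * t ≤ t1 := by
    rw [htdef]; rw [mul_div_cancel₀ _ (two_ne_zero)]; exact min_le_left _ _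
  have h2t2 : 2 * t ≤ t2 := by
    rw [htdef]; rw [mul_div_cancel₀ _ (two_ne_zero)]; exact min_le_right _ _
  have h2t : 0 < 2 * t := by positivity
  have key : Metric.infDist (yb + t • (y1 + y2)) Ω / t
      ≤ Metric.infDist (yb + (2*t) • y1) Ω / (2*t)
        + Metric.infDist (yb + (2*t) • y2) Ω / (2*t) := by
    have heq : yb + t • (y1 + y2)
        = (1/2:ℝ) • (yb + (2*t) • y1) + (1/2:ℝ) • (yb + (2*t) • y2) := by module
    have hhalf := rnr_infDist_half hconv ⟨yb, hyb⟩ (yb + (2*t) • y1) (yb + (2*t) • y2)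
    rw [← heq] at hhalf
    calc Metric.infDist (yb + t • (y1 + y2)) Ω / t
        ≤ (Metric.infDist (yb + (2*t) • y1) Ω / 2
            + Metric.infDist (yb + (2*t) • y2) Ω / 2) / t := by
          exact (div_le_div_iff_of_pos_right ht).2 hhalf
      _ = Metric.infDist (yb + (2*t) • y1) Ω / (2*t)
            + Metric.infDist (yb + (2*t) • y2) Ω / (2*t) := by ring
  calc rnrSigma Ω yb (y1 + y2) ≤ Metric.infDist (yb + t • (y1 + y2)) Ω / t :=
        rnrSigma_le Ω yb _ ht
    _ ≤ Metric.infDist (yb + (2*t) • y1) Ω / (2*t)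
        + Metric.infDist (yb + (2*t) • y2) Ω / (2*t) := key
    _ ≤ Metric.infDist (yb + t1 • y1) Ω / t1 + Metric.infDist (yb + t2 • y2) Ω / t2 :=
        add_le_add (rnr_infDist_scale_div hconv hyb y1 h2t h2t1)
          (rnr_infDist_scale_div hconv hyb y2 h2t h2t2)
    _ ≤ (rnrSigma Ω yb y1 + ε/2) + (rnrSigma Ω yb y2 + ε/2) := add_le_add h1'.le h2'.le
    _ = rnrSigma Ω yb y1 + rnrSigma Ω yb y2 + ε := by ring

private lemma rnrSigma_smul_le {Ω : Set E} {yb : E} (y : E) {c : ℝ} (hc : 0 < c) :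
    rnrSigma Ω yb (c • y) ≤ c * rnrSigma Ω yb y := by
  refine rnr_le_of_forall_pos fun ε hε => ?_
  obtain ⟨⟨t, ht⟩, h1'⟩ := exists_lt_of_ciInf_lt
    (show rnrSigma Ω yb y < rnrSigma Ω yb y + ε/c by
      have : 0 < ε / c := by positivity
      linarith)
  have ht' : (0:ℝ) < t := ht
  have h1 : rnrSigma Ω yb (c • y) ≤ Metric.infDist (yb + (t/c) • (c • y)) Ω / (t/c) :=
    rnrSigma_le _ _ _ (by positivity)
  have heq : (t/c) • (c • y) = t • y := by
    rw [smul_smul, div_mul_cancel₀ _ hc.ne']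
  rw [heq] at h1
  have h2 : Metric.infDist (yb + t • y) Ω / (t/c)
      = c * (Metric.infDist (yb + t • y) Ω / t) := by
    field_simp
  rw [h2] at h1
  calc rnrSigma Ω yb (c • y) ≤ c * (Metric.infDist (yb + t • y) Ω / t) := h1
    _ ≤ c * (rnrSigma Ω yb y + ε/c) := mul_le_mul_of_nonneg_left h1'.le hc.le
    _ = c * rnrSigma Ω yb y + ε := by
        rw [mul_add, mul_div_cancel₀ _ hc.ne']

private lemma rnrSigma_smul {Ω : Set E} {yb : E} (y : E) {c : ℝ} (hc : 0 < c) :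
    rnrSigma Ω yb (c • y) = c * rnrSigma Ω yb y := by
  refine le_antisymm (rnrSigma_smul_le y hc) ?_
  have h := rnrSigma_smul_le (Ω := Ω) (yb := yb) (c • y) (inv_pos.2 hc)
  rw [inv_smul_smul₀ hc.ne'] at h
  calc c * rnrSigma Ω yb y ≤ c * (c⁻¹ * rnrSigma Ω yb (c • y)) :=
        mul_le_mul_of_nonneg_left h hc.le
    _ = rnrSigma Ω yb (c • y) := by field_simp

private lemma rnrSigma_zero {Ω : Set E} {yb : E} (hyb : yb ∈ Ω) : rnrSigma Ω yb 0 = 0 := by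
  refine le_antisymm ?_ (rnrSigma_nonneg _ _ _)
  have h := rnrSigma_le Ω yb (0:E) one_pos
  simpa [Metric.infDist_zero_of_mem hyb] using h

private lemma rnrSigma_le_norm {Ω : Set E} {yb : E} (hyb : yb ∈ Ω) (y : E) :
    rnrSigma Ω yb y ≤ ‖y‖ := by
  have h := rnrSigma_le Ω yb y one_pos
  rw [one_smul, div_one] at h
  refine h.trans ?_
  calc Metric.infDist (yb + y) Ω ≤ dist (yb + y) yb := Metric.infDist_le_dist_of_mem hyb
    _ = ‖y‖ := by rw [dist_eq_norm]; simp

private lemma rnrSigma_nonpos_of_mem {Ω : Set E} {yb : E} {y' : E} (hy' : y' ∈ Ω) :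
    rnrSigma Ω yb (y' - yb) ≤ 0 := by
  have h := rnrSigma_le Ω yb (y' - yb) one_pos
  simpa [Metric.infDist_zero_of_mem hy'] using h

end RNRAux

set_option maxHeartbeats 1000000 in
/-- under metric subregularity of `z ↦ f(z) - Ω` at `(z̄, 0)`
with modulus `κ`, every regular normal `z* ∈ N̂_{f⁻¹(Ω)}(z̄)` can be written as
`z* = ∇f(z̄)* y*` with `y* ∈ N_Ω(f z̄)` and `‖y*‖ ≤ κ ‖z*‖`. -/
theorem regular_normal_representation
    {Z Y : Type*} [NormedAddCommGroup Z] [InnerProductSpace ℝ Z] [FiniteDimensional ℝ Z]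
    [NormedAddCommGroup Y] [InnerProductSpace ℝ Y] [FiniteDimensional ℝ Y]
    (f : Z → Y) (z0 : Z) (hf : ContDiffAt ℝ 1 f z0)
    (Ω : Set Y) (hΩclosed : IsClosed Ω) (hΩconv : Convex ℝ Ω) (hfz : f z0 ∈ Ω)
    (κ : ℝ) (hκ : 0 ≤ κ)
    (hsub : ∀ᶠ z in 𝓝 z0, Metric.infDist z (f ⁻¹' Ω) ≤ κ * Metric.infDist (f z) Ω) :
    ∀ zs ∈ regNormalCone (f ⁻¹' Ω) z0,
      ∃ ys ∈ normalCone Ω (f z0),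
        zs = ContinuousLinearMap.adjoint (fderiv ℝ f z0) ys ∧ ‖ys‖ ≤ κ * ‖zs‖ := by
  classical
  intro zs hzs
  set ybar : Y := f z0 with hybar
  set A : Z →L[ℝ] Y := fderiv ℝ f z0 with hA
  set c : ℝ := κ * ‖zs‖ with hc
  have hc0 : 0 ≤ c := mul_nonneg hκ (norm_nonneg _)
  set C : Set Z := f ⁻¹' Ω with hCdef
  have hz0C : z0 ∈ C := hfz
  -- Step A : local penalization estimate
  have stepA : ∀ δ > (0:ℝ), ∃ r > (0:ℝ), ∀ z : Z, dist z z0 < r →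
      ⟪zs, z - z0⟫ ≤ c * Metric.infDist (f z) Ω + δ * ‖z - z0‖ := by
    intro δ hδ
    set ε' : ℝ := min 1 (δ / (3 + ‖zs‖)) with hε'def
    have hε'pos : 0 < ε' := lt_min one_pos (by positivity)
    have hε'le1 : ε' ≤ 1 := min_le_left _ _
    have hε'le : ε' * (3 + ‖zs‖) ≤ δ := by
      have h1 : ε' ≤ δ / (3 + ‖zs‖) := min_le_right _ _
      have h2 : (0:ℝ) < 3 + ‖zs‖ := by positivity
      calc ε' * (3 + ‖zs‖) ≤ (δ / (3 + ‖zs‖)) * (3 + ‖zs‖) :=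
            mul_le_mul_of_nonneg_right h1 h2.le
        _ = δ := div_mul_cancel₀ _ h2.ne'
    obtain ⟨r1, hr1pos, hr1⟩ := Metric.mem_nhdsWithin_iff.1 (hzs ε' hε'pos)
    obtain ⟨r2, hr2pos, hr2⟩ := Metric.eventually_nhds_iff.1 hsub
    refine ⟨min r2 (r1/4), by positivity, fun z hz => ?_⟩
    have hzr2 : dist z z0 < r2 := hz.trans_le (min_le_left _ _)
    have hzr1 : dist z z0 < r1/4 := hz.trans_le (min_le_right _ _)
    have hd1 : Metric.infDist z C ≤ κ * Metric.infDist (f z) Ω := hr2 hzr2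
    have hd2 : Metric.infDist z C ≤ ‖z - z0‖ := by
      have h : Metric.infDist z C ≤ dist z z0 := Metric.infDist_le_dist_of_mem hz0C
      rwa [dist_eq_norm] at h
    by_cases hz0 : z = z0
    · subst hz0
      simp only [sub_self, inner_zero_right, norm_zero, mul_zero, add_zero]
      exact mul_nonneg hc0 Metric.infDist_nonneg
    have hn : 0 < ‖z - z0‖ := by
      rw [norm_pos_iff, sub_ne_zero]; exact hz0
    have hlt : Metric.infDist z C < Metric.infDist z C + ε' * ‖z - z0‖ :=
      lt_add_of_pos_right _ (by positivity)
    obtain ⟨w, hwC, hwd⟩ := (Metric.infDist_lt_iff ⟨z0, hz0C⟩).1 hlt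
    have t4 : dist z z0 = ‖z - z0‖ := dist_eq_norm _ _
    have hwn : ‖w - z0‖ ≤ 3 * ‖z - z0‖ := by
      have t1 : dist w z0 ≤ dist w z + dist z z0 := dist_triangle _ _ _
      have t2 : dist w z = dist z w := dist_comm _ _
      have t3 : ε' * ‖z - z0‖ ≤ ‖z - z0‖ := by nlinarith
      have t5 : ‖w - z0‖ = dist w z0 := (dist_eq_norm _ _).symm
      linarith [hwd, hd2]
    have hwr1 : dist w z0 < r1 := by
      have t5 : ‖w - z0‖ = dist w z0 := (dist_eq_norm _ _).symm
      linarith [hwn, hzr1]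
    have hw_ineq : ⟪zs, w - z0⟫ ≤ ε' * ‖w - z0‖ :=
      hr1 ⟨Metric.mem_ball.2 hwr1, hwC⟩
    have hsplit : ⟪zs, z - z0⟫ = ⟪zs, w - z0⟫ + ⟪zs, z - w⟫ := by
      rw [← inner_add_right]
      congr 1
      abel
    have hcs : ⟪zs, z - w⟫ ≤ ‖zs‖ * ‖z - w‖ := real_inner_le_norm _ _
    have hzw : ‖z - w‖ ≤ κ * Metric.infDist (f z) Ω + ε' * ‖z - z0‖ := by
      have t6 : ‖z - w‖ = dist z w := (dist_eq_norm _ _).symm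
      linarith [hwd, hd1]
    have e1 : ⟪zs, w - z0⟫ ≤ ε' * (3 * ‖z - z0‖) :=
      hw_ineq.trans (mul_le_mul_of_nonneg_left hwn hε'pos.le)
    have e2 : ⟪zs, z - w⟫ ≤ ‖zs‖ * (κ * Metric.infDist (f z) Ω + ε' * ‖z - z0‖) :=
      hcs.trans (mul_le_mul_of_nonneg_left hzw (norm_nonneg _))
    have hfinal : ⟪zs, z - z0⟫
        ≤ c * Metric.infDist (f z) Ω + (ε' * (3 + ‖zs‖)) * ‖z - z0‖ := by
      rw [hsplit, hc]
      nlinarith [e1, e2]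
    have hlast : (ε' * (3 + ‖zs‖)) * ‖z - z0‖ ≤ δ * ‖z - z0‖ :=
      mul_le_mul_of_nonneg_right hε'le hn.le
    linarith
  -- derivative
  have hder : HasFDerivAt f A z0 := by
    rw [hA]
    exact (hf.differentiableAt one_ne_zero).hasFDerivAt
  -- key inequality : the linear functional is dominated by the sublinear function
  have key : ∀ h : Z, ⟪zs, h⟫ ≤ c * rnrSigma Ω ybar (A h) := by
    intro h
    by_cases h0 : h = 0
    · subst h0
      simp only [inner_zero_right, map_zero]
      rw [rnrSigma_zero hfz, mul_zero]
    have hhn : 0 < ‖h‖ := norm_pos_iff.2 h0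
    have keyt : ∀ t : ℝ, 0 < t →
        ⟪zs, h⟫ ≤ c * (Metric.infDist (ybar + t • (A h)) Ω / t) := by
      intro t ht
      refine rnr_le_of_forall_pos fun ε hε => ?_
      set δ : ℝ := ε / ((1 + c) * (1 + ‖h‖)) with hδdef
      have hδ : 0 < δ := by positivity
      obtain ⟨r, hrpos, hr⟩ := stepA δ hδ
      have hlo := Asymptotics.isLittleO_iff.1 (hasFDerivAt_iff_isLittleO_nhds_zero.1 hder) hδ
      obtain ⟨r2, hr2pos, hr2⟩ := Metric.eventually_nhds_iff.1 hlo
      set s : ℝ := min t (min r r2 / (2 * (1 + ‖h‖))) with hsdef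
      have hspos : 0 < s := lt_min ht (by positivity)
      have hst : s ≤ t := min_le_left _ _
      have hsh : s * ‖h‖ < min r r2 := by
        have h1 : s ≤ min r r2 / (2 * (1 + ‖h‖)) := min_le_right _ _
        have h2 : 0 < min r r2 := lt_min hrpos hr2pos
        have h3 : s * ‖h‖ ≤ (min r r2 / (2 * (1 + ‖h‖))) * ‖h‖ :=
          mul_le_mul_of_nonneg_right h1 (norm_nonneg _)
        have h4 : (min r r2 / (2 * (1 + ‖h‖))) * ‖h‖ < min r r2 := by
          rw [div_mul_eq_mul_div, div_lt_iff₀ (by positivity)]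
          nlinarith [hhn, h2]
        linarith
      set z : Z := z0 + s • h with hzdef
      have hzz0 : z - z0 = s • h := by rw [hzdef]; abel
      have hnorm : ‖z - z0‖ = s * ‖h‖ := by
        rw [hzz0, norm_smul, Real.norm_eq_abs, abs_of_pos hspos]
      have hdz : dist z z0 < r := by
        rw [dist_eq_norm, hnorm]
        exact hsh.trans_le (min_le_left _ _)
      have hstepA := hr z hdz
      have hlin : ‖f z - ybar - A (s • h)‖ ≤ δ * (s * ‖h‖) := by
        have hv : dist (s • h) 0 < r2 := by
          rw [dist_zero_right, norm_smul, Real.norm_eq_abs, abs_of_pos hspos]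
          exact hsh.trans_le (min_le_right _ _)
        have h5 := hr2 hv
        rw [hzdef]
        calc ‖f (z0 + s • h) - ybar - A (s • h)‖ ≤ δ * ‖s • h‖ := h5
          _ = δ * (s * ‖h‖) := by
            rw [norm_smul, Real.norm_eq_abs, abs_of_pos hspos]
      have hDlip : Metric.infDist (f z) Ω
          ≤ Metric.infDist (ybar + s • (A h)) Ω + δ * (s * ‖h‖) := by
        have h1 : Metric.infDist (f z) Ω ≤ Metric.infDist (ybar + s • (A h)) Ω
            + dist (f z) (ybar + s • (A h)) := Metric.infDist_le_infDist_add_dist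
        have h2 : dist (f z) (ybar + s • (A h)) = ‖f z - ybar - A (s • h)‖ := by
          rw [dist_eq_norm, map_smul]
          congr 1
          abel
        rw [h2] at h1
        linarith [hlin]
      have hscale : Metric.infDist (ybar + s • (A h)) Ω
          ≤ (s / t) * Metric.infDist (ybar + t • (A h)) Ω :=
        rnr_infDist_scale hΩconv hfz (A h) hspos hst
      have hinner : ⟪zs, z - z0⟫ = s * ⟪zs, h⟫ := by
        rw [hzz0, real_inner_smul_right]
      rw [hinner, hnorm] at hstepA
      have hmul : s * ⟪zs, h⟫
          ≤ s * (c * (Metric.infDist (ybar + t • (A h)) Ω / t) + (c + 1) * δ * ‖h‖) := by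
        have e1 : c * Metric.infDist (f z) Ω
            ≤ c * ((s/t) * Metric.infDist (ybar + t • (A h)) Ω + δ * (s * ‖h‖)) :=
          mul_le_mul_of_nonneg_left (by linarith [hDlip, hscale]) hc0
        have e2 : c * ((s/t) * Metric.infDist (ybar + t • (A h)) Ω + δ * (s * ‖h‖))
              + δ * (s * ‖h‖)
            = s * (c * (Metric.infDist (ybar + t • (A h)) Ω / t) + (c + 1) * δ * ‖h‖) := by
          field_simp
          ring
        calc s * ⟪zs, h⟫ ≤ c * Metric.infDist (f z) Ω + δ * (s * ‖h‖) := hstepA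
          _ ≤ c * ((s/t) * Metric.infDist (ybar + t • (A h)) Ω + δ * (s * ‖h‖))
              + δ * (s * ‖h‖) := by linarith [e1]
          _ = _ := e2
      have hP : ⟪zs, h⟫
          ≤ c * (Metric.infDist (ybar + t • (A h)) Ω / t) + (c + 1) * δ * ‖h‖ :=
        le_of_mul_le_mul_left hmul hspos
      have hfin : (c + 1) * δ * ‖h‖ ≤ ε := by
        have hX : (0:ℝ) < (1 + c) * (1 + ‖h‖) := by positivity
        have hq1 : (c + 1) * δ * ‖h‖ = ε * (((c + 1) * ‖h‖) / ((1 + c) * (1 + ‖h‖))) := by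
          rw [hδdef]; ring
        have hq2 : ((c + 1) * ‖h‖) / ((1 + c) * (1 + ‖h‖)) ≤ 1 := by
          rw [div_le_one hX]; nlinarith [hhn.le, hc0]
        rw [hq1]
        exact mul_le_of_le_one_right hε.le hq2
      linarith
    by_cases hcz : c = 0
    · have h1 := keyt 1 one_pos
      rw [hcz] at h1 ⊢
      simpa using h1
    have hcpos : 0 < c := lt_of_le_of_ne hc0 (Ne.symm hcz)
    have hdivle : ⟪zs, h⟫ / c ≤ rnrSigma Ω ybar (A h) := by
      apply le_ciInf
      rintro ⟨t, ht⟩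
      have ht' : (0:ℝ) < t := ht
      exact (div_le_iff₀' hcpos).2 (keyt t ht')
    calc ⟪zs, h⟫ = c * (⟪zs, h⟫ / c) := by field_simp
      _ ≤ c * rnrSigma Ω ybar (A h) := mul_le_mul_of_nonneg_left hdivle hc0
  -- the sublinear functional and Hahn–Banach extension
  set N : Y → ℝ := fun y => c * rnrSigma Ω ybar y with hN
  have N_hom : ∀ r : ℝ, 0 < r → ∀ y : Y, N (r • y) = r * N y := by
    intro r hr y
    simp only [hN]
    rw [rnrSigma_smul y hr]
    ring
  have N_add : ∀ y1 y2 : Y, N (y1 + y2) ≤ N y1 + N y2 := by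
    intro y1 y2
    simp only [hN]
    rw [← mul_add]
    exact mul_le_mul_of_nonneg_left (rnrSigma_add hΩconv hfz y1 y2) hc0
  set A' : Z →ₗ[ℝ] Y := (A : Z →ₗ[ℝ] Y) with hA'
  set φ : Z →ₗ[ℝ] ℝ :=
    { toFun := fun v => ⟪zs, v⟫,
      map_add' := fun a b => inner_add_right _ _ _,
      map_smul' := fun m a => by simp [real_inner_smul_right] } with hφ
  have hker : LinearMap.ker A' ≤ LinearMap.ker φ := by
    intro v hv
    rw [LinearMap.mem_ker] at hv ⊢
    have hAv : A v = 0 := hv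
    have k1 := key v
    have k2 := key (-v)
    rw [hAv, rnrSigma_zero hfz, mul_zero] at k1
    rw [map_neg, hAv, neg_zero, rnrSigma_zero hfz, mul_zero, inner_neg_right] at k2
    show ⟪zs, v⟫ = 0
    linarith
  set F : ↥(LinearMap.range A') →ₗ[ℝ] ℝ :=
    ((LinearMap.ker A').liftQ φ hker).comp (A'.quotKerEquivRange.symm.toLinearMap) with hF
  have hFapp : ∀ v : Z, F ⟨A' v, LinearMap.mem_range_self A' v⟩ = ⟪zs, v⟫ := by
    intro v
    have e1 : A'.quotKerEquivRange.symm ⟨A' v, LinearMap.mem_range_self A' v⟩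
        = (LinearMap.ker A').mkQ v := A'.quotKerEquivRange_symm_apply_image v _
    simp only [hF, LinearMap.comp_apply, LinearEquiv.coe_toLinearMap, e1,
      Submodule.mkQ_apply, Submodule.liftQ_apply]
    rfl
  set pmap : Y →ₗ.[ℝ] ℝ := ⟨LinearMap.range A', F⟩ with hpmap
  have hdom : ∀ x : pmap.domain, pmap x ≤ N x := by
    intro x
    obtain ⟨v, hv⟩ := x.2
    have hx : x = ⟨A' v, LinearMap.mem_range_self A' v⟩ := Subtype.ext hv.symm
    rw [hx]
    have h1 : pmap ⟨A' v, LinearMap.mem_range_self A' v⟩ = ⟪zs, v⟫ := hFapp v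
    rw [h1]
    exact key v
  obtain ⟨g, hg_eq, hg_le⟩ := exists_extension_of_le_sublinear pmap N N_hom N_add hdom
  set ys : Y := (InnerProductSpace.toDual ℝ Y).symm (LinearMap.toContinuousLinearMap g)
    with hys
  have hysapp : ∀ y : Y, ⟪ys, y⟫ = g y := by
    intro y
    rw [hys]
    exact InnerProductSpace.toDual_symm_apply
  refine ⟨ys, ?_, ?_, ?_⟩
  · intro y' hy'
    have h1 : g (y' - ybar) ≤ c * rnrSigma Ω ybar (y' - ybar) := hg_le _
    have h2 : rnrSigma Ω ybar (y' - ybar) ≤ 0 := rnrSigma_nonpos_of_mem hy'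
    have h3 : ⟪ys, y' - ybar⟫ = g (y' - ybar) := hysapp _
    show ⟪ys, y' - ybar⟫ ≤ 0
    nlinarith [h1, h2, h3, hc0]
  · apply ext_inner_right ℝ
    intro v
    rw [ContinuousLinearMap.adjoint_inner_left, hysapp]
    have h2 : g (A' v) = ⟪zs, v⟫ :=
      (hg_eq ⟨A' v, LinearMap.mem_range_self A' v⟩).trans (hFapp v)
    exact h2.symm
  · have hb : ∀ y : Y, ⟪ys, y⟫ ≤ c * ‖y‖ := by
      intro y
      rw [hysapp]
      exact (hg_le y).trans (mul_le_mul_of_nonneg_left (rnrSigma_le_norm hfz y) hc0)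
    have h2 : ‖ys‖^2 ≤ c * ‖ys‖ := by
      have h3 := hb ys
      rwa [real_inner_self_eq_norm_sq] at h3
    by_cases hy0 : ‖ys‖ = 0
    · rw [hy0]
      exact hc0
    · have hypos : 0 < ‖ys‖ := lt_of_le_of_ne (norm_nonneg _) (Ne.symm hy0)
      nlinarith [h2, hypos]
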